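/- Let S be a finite set of closed unit-length intervals, let D be the number of distinct integers r such that some interval of S has left endpoint in [r, r+1), and let OPT be a maximum pairwise disjoint subset of S. Then D/2 ≤ |OPT| ≤ D. -/
import Mathlib

open Finset

private lemma disj_of_floor_sep {x y : ℝ} (h : ⌊x⌋ + 2 ≤ ⌊y⌋) :
    Set.Icc x (x + 1) ∩ Set.Icc y (y + 1) = ∅ := by
  rw [Set.eq_empty_iff_forall_notMem]
  rintro z ⟨⟨_, hz1⟩, ⟨hz2, _⟩⟩
  have hx : x < (⌊x⌋ : ℝ) + 1 := Int.lt_floor_add_one x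
  have hy : ((⌊y⌋ : ℤ) : ℝ) ≤ y := Int.floor_le y
  have hc : ((⌊x⌋ : ℝ) + 2) ≤ ((⌊y⌋ : ℤ) : ℝ) := by exact_mod_cast h
  linarith

private lemma inter_ne_of_floor_eq {x y : ℝ} (h : ⌊x⌋ = ⌊y⌋) :
    Set.Icc x (x + 1) ∩ Set.Icc y (y + 1) ≠ ∅ := by
  intro hemp
  have hm : max x y ∈ Set.Icc x (x + 1) ∩ Set.Icc y (y + 1) := by
    have hx1 : x < (⌊x⌋ : ℝ) + 1 := Int.lt_floor_add_one x
    have hy1 : y < (⌊y⌋ : ℝ) + 1 := Int.lt_floor_add_one y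
    have hxf : ((⌊x⌋ : ℤ) : ℝ) ≤ x := Int.floor_le x
    have hyf : ((⌊y⌋ : ℤ) : ℝ) ≤ y := Int.floor_le y
    have hfe : ((⌊x⌋ : ℤ) : ℝ) = ((⌊y⌋ : ℤ) : ℝ) := by exact_mod_cast h
    constructor <;> constructor
    · exact le_max_left x y
    · rcases max_cases x y with ⟨he, _⟩ | ⟨he, _⟩ <;> rw [he] <;> linarith
    · exact le_max_right x y
    · rcases max_cases x y with ⟨he, _⟩ | ⟨he, _⟩ <;> rw [he] <;> linarith
  rw [hemp] at hm
  exact hm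

theorem stmt_4 (S OPT : Finset ℝ) (hsub : OPT ⊆ S)
    (hdisj : ∀ x ∈ OPT, ∀ y ∈ OPT, x ≠ y →
      Set.Icc x (x + 1) ∩ Set.Icc y (y + 1) = ∅)
    (hmax : ∀ T ⊆ S, (∀ x ∈ T, ∀ y ∈ T, x ≠ y →
      Set.Icc x (x + 1) ∩ Set.Icc y (y + 1) = ∅) → T.card ≤ OPT.card)
    (D : ℕ) (hD : D = (S.image (fun x : ℝ => ⌊x⌋)).card) :
    D ≤ 2 * OPT.card ∧ OPT.card ≤ D := by
  classical
  subst hD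
  set R := S.image (fun x : ℝ => ⌊x⌋) with hR
  constructor
  · -- lower bound
    have key : ∀ A ⊆ R, (∀ r ∈ A, ∀ s ∈ A, r ≠ s → 2 ≤ |r - s|) →
        A.card ≤ OPT.card := by
      intro A hA hsep
      set g : ℤ → ℝ := fun r =>
        if h : ∃ x ∈ S, ⌊x⌋ = r then h.choose else 0 with hg
      have hgprop : ∀ r ∈ R, g r ∈ S ∧ ⌊g r⌋ = r := by
        intro r hr
        obtain ⟨x, hx, hfx⟩ := Finset.mem_image.mp hr
        have hex : ∃ x ∈ S, ⌊x⌋ = r := ⟨x, hx, hfx⟩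
        simp only [hg, dif_pos hex]
        exact hex.choose_spec
      set T : Finset ℝ := A.image g with hT
      have hTS : T ⊆ S := by
        intro t ht
        obtain ⟨r, hr, rfl⟩ := Finset.mem_image.mp ht
        exact (hgprop r (hA hr)).1
      have hTdisj : ∀ x ∈ T, ∀ y ∈ T, x ≠ y →
          Set.Icc x (x + 1) ∩ Set.Icc y (y + 1) = ∅ := by
        intro x hx y hy hxy
        obtain ⟨r, hr, rfl⟩ := Finset.mem_image.mp hx
        obtain ⟨s, hs, rfl⟩ := Finset.mem_image.mp hy
        have hrs : r ≠ s := by rintro rfl; exact hxy rfl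
        have h2 := hsep r hr s hs hrs
        have hfr := (hgprop r (hA hr)).2
        have hfs := (hgprop s (hA hs)).2
        rcases abs_cases (r - s) with ⟨he, _⟩ | ⟨he, _⟩
        · rw [Set.inter_comm]
          exact disj_of_floor_sep (by omega)
        · exact disj_of_floor_sep (by omega)
      have hcard : T.card = A.card := by
        rw [hT]
        apply Finset.card_image_of_injOn
        intro r hr s hs hgrs
        have := (hgprop r (hA hr)).2
        rw [hgrs, (hgprop s (hA hs)).2] at this
        exact this.symm
      rw [← hcard]
      exact hmax T hTS hTdisj
    set E := R.filter (fun r => Even r) with hE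
    set O := R.filter (fun r => ¬ Even r) with hO
    have hsum : E.card + O.card = R.card :=
      Finset.card_filter_add_card_filter_not _
    have hEle : E.card ≤ OPT.card := by
      apply key E (Finset.filter_subset _ _)
      intro r hr s hs hrs
      obtain ⟨k, hk⟩ := (Finset.mem_filter.mp hr).2
      obtain ⟨m, hm⟩ := (Finset.mem_filter.mp hs).2
      rcases abs_cases (r - s) with ⟨he, _⟩ | ⟨he, _⟩ <;> omega
    have hOle : O.card ≤ OPT.card := by
      apply key O (Finset.filter_subset _ _)
      intro r hr s hs hrs
      obtain ⟨k, hk⟩ := Int.not_even_iff_odd.mp (Finset.mem_filter.mp hr).2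
      obtain ⟨m, hm⟩ := Int.not_even_iff_odd.mp (Finset.mem_filter.mp hs).2
      rcases abs_cases (r - s) with ⟨he, _⟩ | ⟨he, _⟩ <;> omega
    omega
  · -- upper bound
    have h1 : (OPT.image (fun x : ℝ => ⌊x⌋)).card = OPT.card := by
      apply Finset.card_image_of_injOn
      intro x hx y hy hxy
      by_contra hne
      exact inter_ne_of_floor_eq hxy (hdisj x hx y hy hne)
    calc OPT.card = (OPT.image (fun x : ℝ => ⌊x⌋)).card := h1.symm
      _ ≤ R.card := Finset.card_le_card (Finset.image_subset_image hsub)
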